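/- Let ℓ, m ≥ 3 be integers, α = ℓm−1, β = m. A finite sequence [n_1, …, n_k] of integers with |n_i| ≥ 2 for all i satisfies cf[n_1, …, n_k] = (β−α)/α if and only if it equals the length-ℓ sequence C with C_i = (−1)^i·2 for 1 ≤ i ≤ ℓ−1 and C_ℓ = (−1)^{ℓ−1}·(m−1), or it equals the length-(ℓ+m−3) sequence D with D_i = (−1)^i·2 for all i ≠ ℓ−1 and D_{ℓ−1} = (−1)^{ℓ−1}·3. -/

import Mathlib

/-- The continued fraction value `cf [n_1, …, n_k] = 1/(n_1 + 1/(n_2 + ⋯ + 1/n_k))`. -/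
def cf : List ℤ → ℚ
  | [] => 0
  | n :: L => 1 / ((n : ℚ) + cf L)

lemma cf_nil : cf [] = 0 := rfl
lemma cf_cons (n : ℤ) (L : List ℤ) : cf (n :: L) = 1 / ((n : ℚ) + cf L) := rfl

lemma cf_bound : ∀ L : List ℤ, (∀ n ∈ L, 2 ≤ |n|) → L ≠ [] → |cf L| < 1 ∧ cf L ≠ 0 := by
  intro L
  induction L with
  | nil => intro _ h; exact absurd rfl h
  | cons n T ih =>
    intro hL _
    have hn : 2 ≤ |n| := hL n (by simp)
    have hnQ : (2:ℚ) ≤ |(n:ℚ)| := by exact_mod_cast hn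
    have hT : |cf T| < 1 := by
      rcases eq_or_ne T [] with h | h
      · simp [h, cf_nil]
      · exact (ih (fun x hx => hL x (by simp [hx])) h).1
    have hd : (1:ℚ) < |(n:ℚ) + cf T| := by
      have h1 := abs_add_le ((n:ℚ) + cf T) (-(cf T))
      simp only [add_neg_cancel_right, abs_neg] at h1
      linarith
    have hd0 : (n:ℚ) + cf T ≠ 0 := by
      intro h0; rw [h0] at hd; simp at hd; linarith
    constructor
    · rw [cf_cons, abs_div, abs_one, div_lt_one (by positivity)]
      exact hd
    · rw [cf_cons]
      exact one_div_ne_zero hd0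

lemma cf_map_neg : ∀ L : List ℤ, cf (L.map (fun n => -n)) = - cf L := by
  intro L
  induction L with
  | nil => simp [cf_nil]
  | cons n T ih =>
    simp only [List.map_cons, cf_cons, ih]
    push_cast
    rw [← neg_add, one_div, one_div, inv_neg]

lemma cf_step {n : ℤ} {T : List ℤ} {v : ℚ} (hv : v ≠ 0) (h : cf (n :: T) = v) :
    cf T = 1 / v - n := by
  rw [cf_cons] at h
  have h2 : 1 / (1 / ((n:ℚ) + cf T)) = (n:ℚ) + cf T := one_div_one_div _
  rw [h] at h2
  linarith

lemma end_unique {c : ℤ} (hc : 2 ≤ |c|) {L : List ℤ} (hL : ∀ n ∈ L, 2 ≤ |n|)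
    (h : cf L = 1 / (c:ℚ)) : L = [c] := by
  have hc2 : c ≠ 0 := by intro h0; rw [h0] at hc; simp at hc
  have hc0 : (c:ℚ) ≠ 0 := by exact_mod_cast hc2
  have hv : (1:ℚ) / c ≠ 0 := one_div_ne_zero hc0
  match L with
  | [] => rw [cf_nil] at h; exact absurd h.symm hv
  | n :: T =>
    have hT : cf T = 1 / (1 / (c:ℚ)) - n := cf_step hv h
    rw [one_div_one_div] at hT
    rcases eq_or_ne T [] with hTe | hTe
    · rw [hTe, cf_nil] at hT
      have : (n:ℚ) = c := by linarith
      have : n = c := by exact_mod_cast this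
      rw [hTe, this]
    · exfalso
      obtain ⟨hb, hnz⟩ := cf_bound T (fun x hx => hL x (by simp [hx])) hTe
      rw [hT] at hb hnz
      have h1 : |(c:ℚ) - n| < 1 := hb
      have h2 : ((c - n : ℤ) : ℚ) = (c:ℚ) - n := by push_cast; ring
      have : |((c - n : ℤ) : ℚ)| < 1 := by rw [h2]; exact h1
      have h3 : |c - n| < 1 := by exact_mod_cast this
      rw [abs_lt] at h3
      have hcn : c = n := by omega
      exact hnz (by rw [hcn]; ring)

def pchain (c : ℕ) : List ℤ := List.ofFn (fun j : Fin (c+1) => (-1)^(j:ℕ) * 2)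

lemma pchain_succ (c : ℕ) :
    pchain (c+1) = 2 :: (pchain c).map (fun n => -n) := by
  unfold pchain
  rw [List.ofFn_succ, List.map_ofFn]
  norm_num
  funext i
  show (-1:ℤ) ^ ((i:ℕ) + 1 + 1) * 2 = -((-1) ^ ((i:ℕ) + 1) * 2)
  rw [pow_succ]
  ring


lemma pchain_adm (c : ℕ) : ∀ n ∈ pchain c, 2 ≤ |n| := by
  intro n hn
  unfold pchain at hn
  rw [List.mem_ofFn] at hn
  obtain ⟨j, hj⟩ := hn
  rw [← hj]
  show 2 ≤ |(-1)^(j:ℕ) * 2|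
  rw [abs_mul, abs_pow]
  simp

lemma pchain_val (c : ℕ) : cf (pchain c) = ((c:ℚ)+1)/((c:ℚ)+2) := by
  induction c with
  | zero =>
    show cf [2] = _
    rw [cf_cons, cf_nil]
    norm_num
  | succ c ih =>
    rw [pchain_succ, cf_cons, cf_map_neg, ih]
    have h2 : ((c:ℚ)+2) ≠ 0 := by positivity
    have h3 : ((c:ℚ)+3) ≠ 0 := by positivity
    have h4 : (2:ℚ) - ((c:ℚ)+1)/((c:ℚ)+2) = ((c:ℚ)+3)/((c:ℚ)+2) := by
      field_simp; ring
    push_cast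
    rw [show (2:ℚ) + -(((c:ℚ)+1)/((c:ℚ)+2)) = (2:ℚ) - ((c:ℚ)+1)/((c:ℚ)+2) from by ring, h4, one_div_div]
    ring_nf

lemma map_neg_neg (L : List ℤ) : (L.map (fun n => -n)).map (fun n : ℤ => -n) = L := by
  rw [List.map_map]; simp

lemma adm_map_neg {L : List ℤ} (h : ∀ n ∈ L, 2 ≤ |n|) :
    ∀ n ∈ L.map (fun n => -n), 2 ≤ |n| := by
  intro n hn
  rw [List.mem_map] at hn
  obtain ⟨a, ha, rfl⟩ := hn
  rw [abs_neg]; exact h a ha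

lemma chain_unique : ∀ c : ℕ, ∀ L : List ℤ, (∀ n ∈ L, 2 ≤ |n|) →
    cf L = ((c:ℚ)+1)/((c:ℚ)+2) → L = pchain c := by
  intro c
  induction c with
  | zero =>
    intro L hadm h
    norm_num at h
    match L with
    | [] => rw [cf_nil] at h; norm_num at h
    | n :: T =>
      have hT : cf T = 1 / ((1:ℚ)/2) - n := cf_step (by norm_num) h
      norm_num at hT
      rcases eq_or_ne T [] with hTe | hTe
      · rw [hTe, cf_nil] at hT
        have : (n:ℚ) = 2 := by linarith
        have : n = 2 := by exact_mod_cast this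
        rw [hTe, this]; rfl
      · exfalso
        obtain ⟨hb, hnz⟩ := cf_bound T (fun x hx => hadm x (by simp [hx])) hTe
        rw [hT, abs_lt] at hb
        have h1 : (1:ℚ) < n := by linarith
        have h2 : (n:ℚ) < 3 := by linarith
        have h1' : (1:ℤ) < n := by exact_mod_cast h1
        have h2' : n < 3 := by exact_mod_cast h2
        have : n = 2 := by omega
        rw [this] at hT; norm_num at hT; exact hnz hT
  | succ c ih =>
    intro L hadm h
    have hd2 : (0:ℚ) < (c:ℚ)+2 := by positivity
    have hd3 : (0:ℚ) < (c:ℚ)+3 := by positivity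
    have hv : ((c:ℚ)+1+1)/((c:ℚ)+1+2) ≠ 0 := by positivity
    push_cast at h
    match L with
    | [] => rw [cf_nil] at h; exact absurd h.symm hv
    | n :: T =>
      have hT : cf T = 1/(((c:ℚ)+1+1)/((c:ℚ)+1+2)) - n := cf_step hv h
      rw [one_div_div] at hT
      have hx1 : (1:ℚ) < ((c:ℚ)+1+2)/((c:ℚ)+1+1) := by
        rw [lt_div_iff₀ (by linarith)]; linarith
      have hx2 : ((c:ℚ)+1+2)/((c:ℚ)+1+1) < 2 := by
        rw [div_lt_iff₀ (by linarith)]; linarith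
      rcases eq_or_ne T [] with hTe | hTe
      · exfalso
        rw [hTe, cf_nil] at hT
        have h1 : (1:ℚ) < n := by linarith
        have h2 : (n:ℚ) < 2 := by linarith
        have h1' : (1:ℤ) < n := by exact_mod_cast h1
        have h2' : n < 2 := by exact_mod_cast h2
        omega
      · obtain ⟨hb, hnz⟩ := cf_bound T (fun x hx => hadm x (by simp [hx])) hTe
        rw [hT, abs_lt] at hb
        have h1 : (0:ℚ) < n := by linarith
        have h2 : (n:ℚ) < 3 := by linarith
        have h1' : (0:ℤ) < n := by exact_mod_cast h1
        have h2' : n < 3 := by exact_mod_cast h2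
        have hadm_n : 2 ≤ |n| := hadm n (by simp)
        have hn2 : n = 2 := by rw [abs_of_pos h1'] at hadm_n; omega
        rw [hn2] at hT
        have hT' : cf T = -(((c:ℚ)+1)/((c:ℚ)+2)) := by
          rw [hT]; push_cast
          field_simp
          ring
        have hmapped : cf (T.map (fun n => -n)) = ((c:ℚ)+1)/((c:ℚ)+2) := by
          rw [cf_map_neg, hT', neg_neg]
        have := ih (T.map (fun n => -n)) (adm_map_neg (fun x hx => hadm x (by simp [hx]))) hmapped
        have hTeq : T = (pchain c).map (fun n => -n) := by
          rw [← this, map_neg_neg]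
        rw [hTeq, hn2, ← pchain_succ]

def CC (μ s : ℕ) : List ℤ :=
  List.ofFn (fun j : Fin (s+2) =>
    if (j:ℕ) = s+1 then (-1)^(s+1) * ((μ:ℤ)+2) else (-1)^((j:ℕ)+1) * 2)

def DD (μ s : ℕ) : List ℤ :=
  List.ofFn (fun j : Fin (s+μ+2) =>
    if (j:ℕ) = s then (-1)^(s+1) * 3 else (-1)^((j:ℕ)+1) * 2)

lemma CC_succ (μ s : ℕ) : CC μ (s+1) = -2 :: (CC μ s).map (fun n => -n) := by
  apply List.ext_getElem
  · simp [CC]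
  · intro i h1 h2
    simp only [CC, List.getElem_ofFn] at h1 ⊢
    match i with
    | 0 => norm_num
    | i+1 =>
      simp only [List.getElem_cons_succ, List.getElem_map, List.getElem_ofFn]
      by_cases hi : i = s+1
      · simp [hi, pow_succ]
      · have : ¬ (i + 1 = s + 1 + 1) := by omega
        simp [hi, this, pow_succ]

lemma DD_succ (μ s : ℕ) : DD μ (s+1) = -2 :: (DD μ s).map (fun n => -n) := by
  apply List.ext_getElem
  · simp [DD]; omega
  · intro i h1 h2
    simp only [DD, List.getElem_ofFn] at h1 ⊢
    match i with
    | 0 => norm_num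
    | i+1 =>
      simp only [List.getElem_cons_succ, List.getElem_map, List.getElem_ofFn]
      by_cases hi : i = s
      · simp [hi, pow_succ]
      · have : ¬ (i + 1 = s + 1) := by omega
        simp [hi, this, pow_succ]

lemma CC_zero (μ : ℕ) : CC μ 0 = [-2, -((μ:ℤ)+2)] := by
  simp [CC, List.ofFn_succ]

lemma DD_zero (μ : ℕ) : DD μ 0 = -3 :: pchain μ := by
  apply List.ext_getElem
  · simp [DD, pchain]
  · intro i h1 h2
    simp only [DD, pchain, List.getElem_ofFn] at h1 ⊢
    match i with
    | 0 => norm_num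
    | i+1 =>
      simp only [List.getElem_cons_succ, List.getElem_ofFn]
      have : ¬ (i + 1 = 0) := by omega
      simp [this, pow_succ, pow_add]

lemma cf_cons_of {n : ℤ} {T : List ℤ} {w v : ℚ} (h : cf T = w) (hw : (n:ℚ) + w = 1 / v) :
    cf (n :: T) = v := by
  rw [cf_cons, h, hw, one_div_one_div]

noncomputable def Vv (μ s : ℕ) : ℚ :=
  -(((s:ℚ)+1) * ((μ:ℚ)+3) - 1) / (((s:ℚ)+2) * ((μ:ℚ)+3) - 1)

lemma Vv_pos_facts (μ s : ℕ) :
    (1:ℚ) ≤ ((s:ℚ)+1) * ((μ:ℚ)+3) - 1 ∧ (1:ℚ) ≤ ((s:ℚ)+2) * ((μ:ℚ)+3) - 1 := by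
  have h1 : (0:ℚ) ≤ (s:ℚ) := Nat.cast_nonneg s
  have h2 : (0:ℚ) ≤ (μ:ℚ) := Nat.cast_nonneg μ
  constructor <;> nlinarith

lemma Vv_ne (μ s : ℕ) : Vv μ s ≠ 0 := by
  obtain ⟨h1, h2⟩ := Vv_pos_facts μ s
  rw [Vv, div_ne_zero_iff]
  constructor <;> intro h <;> [linarith [neg_eq_zero.mp h]; linarith]

lemma inv_gen {c A B B' : ℚ} (hB : B ≠ 0) (h : c * B + A = -B') :
    c + A / B = 1 / (-B / B') := by
  rcases eq_or_ne B' 0 with h0 | h0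
  · rw [h0] at h ⊢
    rw [div_zero, one_div, inv_zero]
    have : c + A / B = (c * B + A) / B := by field_simp
    rw [this, h, neg_zero, zero_div]
  · rw [one_div_div, div_neg, ← neg_div, ← h, add_div, mul_div_cancel_right₀ c hB]

lemma cf_CC (μ : ℕ) : ∀ s : ℕ, cf (CC μ s) = Vv μ s := by
  intro s
  induction s with
  | zero =>
    rw [CC_zero]
    have hT : cf [-((μ:ℤ)+2)] = -1/((μ:ℚ)+2) := by
      rw [cf_cons, cf_nil]; push_cast; rw [add_zero, one_div, inv_neg, neg_div, one_div]
    apply cf_cons_of hT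
    rw [Vv]
    push_cast
    rw [show ((0:ℚ)+1)*((μ:ℚ)+3)-1 = (μ:ℚ)+2 from by ring,
        show ((0:ℚ)+2)*((μ:ℚ)+3)-1 = 2*(μ:ℚ)+5 from by ring]
    exact inv_gen (by positivity) (by push_cast; ring)
  | succ s ih =>
    rw [CC_succ]
    obtain ⟨hA, hB⟩ := Vv_pos_facts μ s
    have hT : cf ((CC μ s).map (fun n => -n)) = -Vv μ s := by
      rw [cf_map_neg, ih]
    apply cf_cons_of hT
    rw [Vv, Vv]
    push_cast
    rw [neg_div, neg_neg,
        show ((s:ℚ)+1+1)*((μ:ℚ)+3)-1 = ((s:ℚ)+2)*((μ:ℚ)+3)-1 from by ring,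
        show ((s:ℚ)+1+2)*((μ:ℚ)+3)-1 = ((s:ℚ)+3)*((μ:ℚ)+3)-1 from by ring]
    exact inv_gen (by linarith) (by push_cast; ring)

lemma cf_DD (μ : ℕ) : ∀ s : ℕ, cf (DD μ s) = Vv μ s := by
  intro s
  induction s with
  | zero =>
    rw [DD_zero]
    apply cf_cons_of (pchain_val μ)
    rw [Vv]
    push_cast
    rw [show ((0:ℚ)+1)*((μ:ℚ)+3)-1 = (μ:ℚ)+2 from by ring,
        show ((0:ℚ)+2)*((μ:ℚ)+3)-1 = 2*(μ:ℚ)+5 from by ring]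
    exact inv_gen (by positivity) (by push_cast; ring)
  | succ s ih =>
    rw [DD_succ]
    obtain ⟨hA, hB⟩ := Vv_pos_facts μ s
    have hT : cf ((DD μ s).map (fun n => -n)) = -Vv μ s := by
      rw [cf_map_neg, ih]
    apply cf_cons_of hT
    rw [Vv, Vv]
    push_cast
    rw [neg_div, neg_neg,
        show ((s:ℚ)+1+1)*((μ:ℚ)+3)-1 = ((s:ℚ)+2)*((μ:ℚ)+3)-1 from by ring,
        show ((s:ℚ)+1+2)*((μ:ℚ)+3)-1 = ((s:ℚ)+3)*((μ:ℚ)+3)-1 from by ring]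
    exact inv_gen (by linarith) (by push_cast; ring)

lemma one_div_Vv (μ s : ℕ) :
    1 / Vv μ s = -(((s:ℚ)+2) * ((μ:ℚ)+3) - 1) / (((s:ℚ)+1) * ((μ:ℚ)+3) - 1) := by
  rw [Vv, one_div_div, div_neg, ← neg_div]

lemma main_unique (μ : ℕ) : ∀ s : ℕ, ∀ L : List ℤ, (∀ n ∈ L, 2 ≤ |n|) →
    cf L = Vv μ s → L = CC μ s ∨ L = DD μ s := by
  intro s
  induction s with
  | zero =>
    intro L hadm h
    have hμ0 : (0:ℚ) ≤ (μ:ℚ) := Nat.cast_nonneg μ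
    have hμ2 : (0:ℚ) < (μ:ℚ)+2 := by linarith
    match L with
    | [] => rw [cf_nil] at h; exact absurd h.symm (Vv_ne μ 0)
    | n :: T =>
      have hT : cf T = 1 / Vv μ 0 - n := cf_step (Vv_ne μ 0) h
      rw [one_div_Vv] at hT
      push_cast at hT
      rw [show ((0:ℚ)+2)*((μ:ℚ)+3)-1 = 2*(μ:ℚ)+5 from by ring,
          show ((0:ℚ)+1)*((μ:ℚ)+3)-1 = (μ:ℚ)+2 from by ring] at hT
      have hX1 : (2:ℚ) < (2*(μ:ℚ)+5)/((μ:ℚ)+2) := by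
        rw [lt_div_iff₀ hμ2]; linarith
      have hX2 : (2*(μ:ℚ)+5)/((μ:ℚ)+2) < 3 := by
        rw [div_lt_iff₀ hμ2]; linarith
      rw [neg_div] at hT
      rcases eq_or_ne T [] with hTe | hTe
      · exfalso
        rw [hTe, cf_nil] at hT
        have h1 : (-3:ℚ) < (n:ℚ) := by linarith
        have h2 : (n:ℚ) < -2 := by linarith
        have h1' : (-3:ℤ) < n := by exact_mod_cast h1
        have h2' : n < -2 := by exact_mod_cast h2
        omega
      · obtain ⟨hb, hnz⟩ := cf_bound T (fun x hx => hadm x (by simp [hx])) hTe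
        rw [hT, abs_lt] at hb
        have h1 : (-4:ℚ) < (n:ℚ) := by linarith
        have h2 : (n:ℚ) < -1 := by linarith
        have h1' : (-4:ℤ) < n := by exact_mod_cast h1
        have h2' : n < -1 := by exact_mod_cast h2
        have hn : n = -2 ∨ n = -3 := by omega
        rcases hn with hn | hn
        · left
          rw [hn] at hT
          push_cast at hT
          have hne : ((μ:ℚ)+2) ≠ 0 := ne_of_gt hμ2
          have hT2 : cf T = 1 / ((-((μ:ℤ)+2) : ℤ) : ℚ) := by
            rw [hT]
            push_cast
            rw [div_neg]
            field_simp
            ring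
          have habs : (2:ℤ) ≤ |(-((μ:ℤ)+2))| := by
            rw [abs_neg, abs_of_nonneg (by positivity)]
            omega
          have := end_unique habs (fun x hx => hadm x (by simp [hx])) hT2
          rw [hn, this, CC_zero]
        · right
          rw [hn] at hT
          push_cast at hT
          have hne : ((μ:ℚ)+2) ≠ 0 := ne_of_gt hμ2
          have hT2 : cf T = ((μ:ℚ)+1)/((μ:ℚ)+2) := by
            rw [hT]
            field_simp
            ring
          have := chain_unique μ T (fun x hx => hadm x (by simp [hx]))
            hT2
          rw [hn, this, DD_zero]
  | succ s ih =>
    intro L hadm h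
    obtain ⟨hA, hB⟩ := Vv_pos_facts μ s
    obtain ⟨hA', hB'⟩ := Vv_pos_facts μ (s+1)
    push_cast at hA' hB'
    have hμ0 : (0:ℚ) ≤ (μ:ℚ) := Nat.cast_nonneg μ
    have hs0 : (0:ℚ) ≤ (s:ℚ) := Nat.cast_nonneg s
    match L with
    | [] => rw [cf_nil] at h; exact absurd h.symm (Vv_ne μ (s+1))
    | n :: T =>
      have hT : cf T = 1 / Vv μ (s+1) - n := cf_step (Vv_ne μ (s+1)) h
      rw [one_div_Vv] at hT
      push_cast at hT
      rw [show ((s:ℚ)+1+2)*((μ:ℚ)+3)-1 = ((s:ℚ)+3)*((μ:ℚ)+3)-1 from by ring,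
          show ((s:ℚ)+1+1)*((μ:ℚ)+3)-1 = ((s:ℚ)+2)*((μ:ℚ)+3)-1 from by ring] at hT
      have hApos : (0:ℚ) < ((s:ℚ)+2)*((μ:ℚ)+3)-1 := by linarith
      have hX1 : (1:ℚ) < (((s:ℚ)+3)*((μ:ℚ)+3)-1)/(((s:ℚ)+2)*((μ:ℚ)+3)-1) := by
        rw [lt_div_iff₀ hApos]; nlinarith
      have hX2 : (((s:ℚ)+3)*((μ:ℚ)+3)-1)/(((s:ℚ)+2)*((μ:ℚ)+3)-1) < 2 := by
        rw [div_lt_iff₀ hApos]; nlinarith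
      rw [neg_div] at hT
      rcases eq_or_ne T [] with hTe | hTe
      · exfalso
        rw [hTe, cf_nil] at hT
        have h1 : (-2:ℚ) < (n:ℚ) := by linarith
        have h2 : (n:ℚ) < -1 := by linarith
        have h1' : (-2:ℤ) < n := by exact_mod_cast h1
        have h2' : n < -1 := by exact_mod_cast h2
        omega
      · obtain ⟨hb, hnz⟩ := cf_bound T (fun x hx => hadm x (by simp [hx])) hTe
        rw [hT, abs_lt] at hb
        have h1 : (-3:ℚ) < (n:ℚ) := by linarith
        have h2 : (n:ℚ) < 0 := by linarith
        have h1' : (-3:ℤ) < n := by exact_mod_cast h1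
        have h2' : n < 0 := by exact_mod_cast h2
        have hadm_n : 2 ≤ |n| := hadm n (by simp)
        rw [abs_of_neg (by exact_mod_cast h2)] at hadm_n
        have hn : n = -2 := by omega
        rw [hn] at hT
        push_cast at hT
        have hne : (((s:ℚ)+2)*((μ:ℚ)+3)-1) ≠ 0 := ne_of_gt hApos
        have hT2 : cf T = -Vv μ s := by
          rw [hT, Vv]
          push_cast
          have e : ((s:ℚ)+3)*((μ:ℚ)+3)-1 = 2*(((s:ℚ)+2)*((μ:ℚ)+3)-1) - (((s:ℚ)+1)*((μ:ℚ)+3)-1) := by ring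
          rw [e, sub_div, mul_div_cancel_right₀ _ hne]
          ring
        have hmap : cf (T.map (fun n => -n)) = Vv μ s := by
          rw [cf_map_neg, hT2, neg_neg]
        rcases ih (T.map (fun n => -n)) (adm_map_neg (fun x hx => hadm x (by simp [hx]))) hmap with hc | hc
        · left
          have hTeq : T = (CC μ s).map (fun n => -n) := by rw [← hc, map_neg_neg]
          rw [hn, hTeq, CC_succ]
        · right
          have hTeq : T = (DD μ s).map (fun n => -n) := by rw [← hc, map_neg_neg]
          rw [hn, hTeq, DD_succ]

/-- For `ℓ, m ≥ 3`, `α = ℓm−1`, `β = m`: a sequence of integers all of absolute value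
at least `2` has continued fraction value `(β−α)/α` iff it is the length-`ℓ` sequence
`C` with `C_i = (−1)^i·2` for `1 ≤ i ≤ ℓ−1` and `C_ℓ = (−1)^{ℓ−1}·(m−1)`, or the
length-`(ℓ+m−3)` sequence `D` with `D_i = (−1)^i·2` for `i ≠ ℓ−1` and
`D_{ℓ−1} = (−1)^{ℓ−1}·3`. -/
theorem cf_eq_iff_C_or_D (ℓ m : ℕ) (hℓ : 3 ≤ ℓ) (hm : 3 ≤ m)
    (L : List ℤ) (hL : ∀ n ∈ L, 2 ≤ |n|) :
    cf L = ((m : ℚ) - ((ℓ : ℚ) * m - 1)) / ((ℓ : ℚ) * m - 1) ↔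
      L = List.ofFn (fun j : Fin ℓ =>
            if (j : ℕ) = ℓ - 1 then (-1) ^ (ℓ - 1) * ((m : ℤ) - 1)
            else (-1) ^ ((j : ℕ) + 1) * 2) ∨
      L = List.ofFn (fun j : Fin (ℓ + m - 3) =>
            if (j : ℕ) = ℓ - 2 then (-1) ^ (ℓ - 1) * 3
            else (-1) ^ ((j : ℕ) + 1) * 2) := by
  obtain ⟨a, rfl⟩ : ∃ a, ℓ = a + 3 := ⟨ℓ - 3, by omega⟩
  obtain ⟨μ, rfl⟩ : ∃ μ, m = μ + 3 := ⟨m - 3, by omega⟩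
  have hμ0 : (0:ℚ) ≤ (μ:ℚ) := Nat.cast_nonneg μ
  have ha0 : (0:ℚ) ≤ (a:ℚ) := Nat.cast_nonneg a
  have hval : ((↑(μ+3):ℚ) - ((↑(a+3):ℚ) * (↑(μ+3):ℚ) - 1)) / ((↑(a+3):ℚ) * (↑(μ+3):ℚ) - 1)
      = Vv μ (a+1) := by
    rw [Vv]
    push_cast
    rw [div_eq_div_iff (by nlinarith) (by nlinarith)]
    ring
  have hC : List.ofFn (fun j : Fin (a+3) =>
        if (j : ℕ) = (a+3) - 1 then (-1) ^ ((a+3) - 1) * ((↑(μ+3):ℤ) - 1)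
        else (-1) ^ ((j : ℕ) + 1) * 2) = CC μ (a+1) := by
    apply List.ext_getElem
    · simp [CC]
    · intro i h1 h2
      simp only [CC, List.getElem_ofFn]
      rw [show a + 3 - 1 = a + 2 from by omega]
      by_cases hi : i = a + 2
      · simp only [hi, if_pos rfl, if_true]
        push_cast
        ring
      · rw [if_neg hi, if_neg (by omega : ¬ (i = a + 1 + 1))]
  have hD : List.ofFn (fun j : Fin ((a+3) + (μ+3) - 3) =>
        if (j : ℕ) = (a+3) - 2 then (-1) ^ ((a+3) - 1) * 3
        else (-1) ^ ((j : ℕ) + 1) * 2) = DD μ (a+1) := by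
    apply List.ext_getElem
    · simp [DD]; omega
    · intro i h1 h2
      simp only [DD, List.getElem_ofFn]
      rw [show a + 3 - 2 = a + 1 from by omega, show a + 3 - 1 = a + 2 from by omega]
  constructor
  · intro h
    rw [hval] at h
    rcases main_unique μ (a+1) L hL h with hc | hc
    · left; rw [hC]; exact hc
    · right; rw [hD]; exact hc
  · intro h
    rcases h with rfl | rfl
    · rw [hC, cf_CC, hval]
    · rw [hD, cf_DD, hval]
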